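/- (Flat-space limit of de Sitter plane waves.) Let m > 0 and t, q, p₁ ∈ ℝ. Set p = (√(p₁² + m²), p₁, −m) ∈ ℝ³, and for r > 0 let x_r = ( r sinh(t/r) + (q²/(2r)) e^{−t/r}, q, r cosh(t/r) − (q²/(2r)) e^{−t/r} ) (which equals Λ₁(t/r) D(q/r) (0,0,r)). Then: (i) Q(x_r) = −r² for every r > 0, i.e. x_r ∈ dS_r; (ii) η(x_r, p)/(m r) → 1 as r → ∞, and in particular η(x_r, p) > 0 for all sufficiently large r; (iii) the complex powers converge: ( η(x_r, p)/(m r) )^{−1/2 − i m r} → exp( −i ( t √(p₁² + m²) − q p₁ ) ) as r → ∞, where w ↦ w^c denotes the principal complex power. -/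

import Mathlib

open Matrix

noncomputable section

/-- The Minkowski bilinear form `η(x,y) = x₀y₀ − x₁y₁ − x₂y₂` on ℝ³. -/
def mink (x y : Fin 3 → ℝ) : ℝ := x 0 * y 0 - x 1 * y 1 - x 2 * y 2

/-- The Minkowski quadratic form `Q(x) = η(x,x)`. -/
def Qf (x : Fin 3 → ℝ) : ℝ := mink x x

/-- The Minkowski metric matrix `diag(1,−1,−1)`. -/
def etaM : Matrix (Fin 3) (Fin 3) ℝ := !![1, 0, 0; 0, -1, 0; 0, 0, -1]

/-- The Lorentz group `O(1,2)`, as a set of 3×3 real matrices. -/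
def O12 : Set (Matrix (Fin 3) (Fin 3) ℝ) := {L | L * etaM * Lᵀ = etaM}

/-- The proper orthochronous Lorentz group `SO₀(1,2)`. -/
def SO012 : Set (Matrix (Fin 3) (Fin 3) ℝ) :=
  {L | L * etaM * Lᵀ = etaM ∧ L.det = 1 ∧ 0 < L 0 0}

/-- The rotation `R₀(α)` around the `x₀`-axis. -/
def R0 (α : ℝ) : Matrix (Fin 3) (Fin 3) ℝ :=
  !![1, 0, 0; 0, Real.cos α, -Real.sin α; 0, Real.sin α, Real.cos α]

/-- The boost `Λ₁(t)` leaving the `x₁`-axis invariant. -/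
def B1 (t : ℝ) : Matrix (Fin 3) (Fin 3) ℝ :=
  !![Real.cosh t, 0, Real.sinh t; 0, 1, 0; Real.sinh t, 0, Real.cosh t]

/-- The boost `Λ₂(s)` leaving the `x₂`-axis invariant. -/
def B2 (s : ℝ) : Matrix (Fin 3) (Fin 3) ℝ :=
  !![Real.cosh s, Real.sinh s, 0; Real.sinh s, Real.cosh s, 0; 0, 0, 1]

/-- The horospherical translation `D(q)`. -/
def Dm (q : ℝ) : Matrix (Fin 3) (Fin 3) ℝ :=
  !![1 + q ^ 2 / 2, q, q ^ 2 / 2; q, 1, q; -(q ^ 2 / 2), -q, 1 - q ^ 2 / 2]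

/-- The time reflection `T = diag(−1,1,1)`. -/
def Tm : Matrix (Fin 3) (Fin 3) ℝ := !![-1, 0, 0; 0, 1, 0; 0, 0, 1]

/-- The space reflection `P = diag(1,−1,−1)`. -/
def Pm : Matrix (Fin 3) (Fin 3) ℝ := !![1, 0, 0; 0, -1, 0; 0, 0, -1]

/-- The future-pointing lightlike vector `p = (√(p₁²+m²), p₁, −m)`. -/
def pvec (m p₁ : ℝ) : Fin 3 → ℝ := ![Real.sqrt (p₁ ^ 2 + m ^ 2), p₁, -m]

/-- The de Sitter point `x_r = Λ₁(t/r) D(q/r) (0,0,r)` in horospherical coordinates. -/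
def xpt (t q r : ℝ) : Fin 3 → ℝ :=
  ![r * Real.sinh (t / r) + q ^ 2 / (2 * r) * Real.exp (-t / r), q,
    r * Real.cosh (t / r) - q ^ 2 / (2 * r) * Real.exp (-t / r)]

/-- flat-space limit of de Sitter plane waves: `x_r ∈ dS_r` (and equals
`Λ₁(t/r) D(q/r) (0,0,r)`); `η(x_r,p)/(mr) → 1` as `r → ∞` (so `η(x_r,p) > 0`
eventually); and `(η(x_r,p)/(mr))^{−1/2 − imr} → exp(−i(t√(p₁²+m²) − q p₁))`. -/

lemma xpt_eq19 (t q r : ℝ) (hr : 0 < r) :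
    xpt t q r = (B1 (t / r) * Dm (q / r)).mulVec ![0, 0, r] := by
  have hr' : r ≠ 0 := ne_of_gt hr
  have h0 : Real.exp (t / r) ≠ 0 := Real.exp_ne_zero _
  funext i
  fin_cases i <;>
    · simp only [xpt, B1, Dm, Matrix.mulVec, Matrix.mul_apply, Fin.sum_univ_three, dotProduct,
        Matrix.cons_val_zero, Matrix.cons_val_one, Matrix.head_cons, Matrix.cons_val_two,
        Matrix.tail_cons, Matrix.cons_val', Matrix.cons_val_fin_one, Matrix.empty_val',
        Matrix.head_fin_const, Fin.isValue, Matrix.of_apply, Fin.zero_eta, Fin.mk_one, Fin.reduceFinMk]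
      try rw [Real.cosh_eq, Real.sinh_eq]
      try simp only [neg_div, Real.exp_neg]
      field_simp
      try ring

lemma Qf_xpt19 (t q r : ℝ) (hr : 0 < r) : Qf (xpt t q r) = -r ^ 2 := by
  have hr' : r ≠ 0 := ne_of_gt hr
  have h0 : Real.exp (t / r) ≠ 0 := Real.exp_ne_zero _
  simp only [Qf, mink, xpt, Matrix.cons_val_zero, Matrix.cons_val_one, Matrix.head_cons,
    Matrix.cons_val_two, Matrix.tail_cons]
  rw [Real.cosh_eq, Real.sinh_eq]
  simp only [neg_div, Real.exp_neg]
  field_simp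
  ring

open Filter in
lemma aux_deriv19 (φ : ℝ → ℝ) (d : ℝ) (h : HasDerivAt φ d 0) (t : ℝ) :
    Tendsto (fun r : ℝ => r * (φ (t / r) - φ 0)) atTop (nhds (t * d)) := by
  rcases eq_or_ne t 0 with rfl | ht
  · simpa using tendsto_const_nhds
  · have hslope := hasDerivAt_iff_tendsto_slope.mp h
    have hcomp : Tendsto (fun r : ℝ => t / r) atTop (nhdsWithin 0 {0}ᶜ) := by
      apply tendsto_nhdsWithin_of_tendsto_nhds_of_eventually_within
      · simpa using tendsto_const_nhds.div_atTop (tendsto_id (α := ℝ))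
      · filter_upwards [eventually_gt_atTop 0] with r hr
        exact div_ne_zero ht (ne_of_gt hr)
    refine ((hslope.comp hcomp).const_mul t).congr' ?_
    filter_upwards [eventually_gt_atTop 0] with r hr
    simp only [Function.comp, slope_def_field]
    rw [sub_zero]
    field_simp

theorem flat_space_limit (m : ℝ) (hm : 0 < m) (t q p₁ : ℝ) :
    (∀ r : ℝ, 0 < r → xpt t q r = (B1 (t / r) * Dm (q / r)).mulVec ![0, 0, r]) ∧
    (∀ r : ℝ, 0 < r → Qf (xpt t q r) = -r ^ 2) ∧
    Filter.Tendsto (fun r : ℝ => mink (xpt t q r) (pvec m p₁) / (m * r))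
      Filter.atTop (nhds 1) ∧
    (∀ᶠ r : ℝ in Filter.atTop, 0 < mink (xpt t q r) (pvec m p₁)) ∧
    Filter.Tendsto
      (fun r : ℝ => ((mink (xpt t q r) (pvec m p₁) / (m * r) : ℝ) : ℂ) ^
        (-(1 / 2 : ℂ) - Complex.I * (m : ℂ) * (r : ℂ)))
      Filter.atTop
      (nhds (Complex.exp (-Complex.I *
        ((t * Real.sqrt (p₁ ^ 2 + m ^ 2) - q * p₁ : ℝ) : ℂ)))) :=
  by
  classical
  have hm' : m ≠ 0 := ne_of_gt hm
  set E := Real.sqrt (p₁ ^ 2 + m ^ 2) with hEdef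
  set w : ℝ → ℝ := fun r => mink (xpt t q r) (pvec m p₁) / (m * r) with hwdef
  set a : ℝ := (t * E - q * p₁) / m with hadef
  have hmink : ∀ r : ℝ, mink (xpt t q r) (pvec m p₁) =
      (r * Real.sinh (t/r) + q^2/(2*r) * Real.exp (-t/r)) * E - q * p₁
      + m * (r * Real.cosh (t/r) - q^2/(2*r) * Real.exp (-t/r)) := by
    intro r
    simp [mink, xpt, pvec]
    ring
  have hφ : HasDerivAt (fun s => Real.cosh s + (E/m) * Real.sinh s) (E/m) 0 := by
    have := (Real.hasDerivAt_cosh 0).add ((Real.hasDerivAt_sinh 0).const_mul (E/m))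
    exact this.congr_deriv (by simp)
  have htr : Filter.Tendsto (fun r : ℝ => -t / r) Filter.atTop (nhds 0) := by
    simpa using tendsto_const_nhds.div_atTop (Filter.tendsto_id (α := ℝ))
  have hexp1 : Filter.Tendsto (fun r : ℝ => Real.exp (-t / r)) Filter.atTop (nhds 1) := by
    have := (Real.continuous_exp.tendsto 0).comp htr
    simpa [Function.comp_def] using this
  have hrinv : Filter.Tendsto (fun r : ℝ => r⁻¹) Filter.atTop (nhds (0:ℝ)) :=
    tendsto_inv_atTop_zero
  have hA : Filter.Tendsto (fun r : ℝ => r * (w r - 1)) Filter.atTop (nhds a) := by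
    have h1 := aux_deriv19 _ _ hφ t
    have h2 : Filter.Tendsto
        (fun r : ℝ => ((E - m) * q ^ 2 / (2 * m)) * (Real.exp (-t / r) * r⁻¹))
        Filter.atTop (nhds 0) := by
      have := (hexp1.mul hrinv).const_mul ((E - m) * q ^ 2 / (2 * m))
      simpa using this
    have h3 := (h1.add h2).add
      (tendsto_const_nhds (x := -(q * p₁ / m)) (f := Filter.atTop))
    have hval : t * (E/m) + 0 + -(q * p₁ / m) = a := by
      rw [hadef]; field_simp; ring
    rw [hval] at h3
    refine h3.congr' ?_
    filter_upwards [Filter.eventually_gt_atTop 0] with r hr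
    have hr' : r ≠ 0 := ne_of_gt hr
    simp only [hwdef, hmink r, Real.cosh_zero, Real.sinh_zero]
    field_simp
    ring
  have hu : Filter.Tendsto (fun r : ℝ => w r - 1) Filter.atTop (nhds 0) := by
    have := hA.mul hrinv
    rw [mul_zero] at this
    refine this.congr' ?_
    filter_upwards [Filter.eventually_gt_atTop 0] with r hr
    field_simp
  have hw1 : Filter.Tendsto w Filter.atTop (nhds 1) := by
    have := hu.add (tendsto_const_nhds (x := (1:ℝ)) (f := Filter.atTop))
    simpa using this
  have hwpos : ∀ᶠ r : ℝ in Filter.atTop, 0 < w r :=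
    hw1.eventually (eventually_gt_nhds one_pos)
  have hminkpos : ∀ᶠ r : ℝ in Filter.atTop, 0 < mink (xpt t q r) (pvec m p₁) := by
    filter_upwards [hwpos, Filter.eventually_gt_atTop 0] with r hw hr
    have hmr : 0 < m * r := mul_pos hm hr
    have := mul_pos hw hmr
    rwa [hwdef, div_mul_cancel₀ _ (ne_of_gt hmr)] at this
  have hsmall : ∀ᶠ r : ℝ in Filter.atTop, |w r - 1| < 1/2 := by
    have h : ∀ᶠ x : ℝ in nhds 0, |x| < 1/2 := by
      have := eventually_abs_sub_lt (0:ℝ) (by norm_num : (0:ℝ) < 1/2)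
      simpa using this
    exact hu.eventually h
  have hbound : ∀ᶠ r : ℝ in Filter.atTop,
      |r * Real.log (w r) - r * (w r - 1)| ≤ 2 * |r * (w r - 1)| * |w r - 1| := by
    filter_upwards [hsmall, hwpos] with r hs hp
    have hx : |1 - w r| < 1 := by rw [abs_sub_comm]; linarith [hs]
    have hthis := Real.abs_log_sub_add_sum_range_le hx 1
    simp only [Finset.sum_range_one, pow_one] at hthis
    have h1w : (1 : ℝ) - (1 - w r) = w r := by ring
    rw [h1w] at hthis
    have habs : |1 - w r| = |w r - 1| := abs_sub_comm _ _
    have hkey : |Real.log (w r) - (w r - 1)| ≤ 2 * |w r - 1| ^ 2 := by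
      have h2 : |1 - w r| ^ 2 / (1 - |1 - w r|) ≤ 2 * |w r - 1| ^ 2 := by
        rw [habs, div_le_iff₀ (by linarith [hs])]
        nlinarith [sq_nonneg (|w r - 1|), abs_nonneg (w r - 1), habs, hs]
      calc |Real.log (w r) - (w r - 1)| = |(1 - w r) / 1 + Real.log (w r)| := by
            rw [div_one]; congr 1; ring
        _ ≤ |1 - w r| ^ 2 / (1 - |1 - w r|) := by
            convert hthis using 3 <;> norm_num
        _ ≤ 2 * |w r - 1| ^ 2 := h2
    calc |r * Real.log (w r) - r * (w r - 1)| = |r| * |Real.log (w r) - (w r - 1)| := by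
          rw [← abs_mul]; congr 1; ring
      _ ≤ |r| * (2 * |w r - 1| ^ 2) := mul_le_mul_of_nonneg_left hkey (abs_nonneg r)
      _ = 2 * |r * (w r - 1)| * |w r - 1| := by rw [abs_mul]; ring
  have htail : Filter.Tendsto (fun r : ℝ => 2 * |r * (w r - 1)| * |w r - 1|)
      Filter.atTop (nhds 0) := by
    have := ((hA.abs.const_mul 2).mul hu.abs)
    simpa using this
  have hdiff : Filter.Tendsto (fun r : ℝ => r * Real.log (w r) - r * (w r - 1))
      Filter.atTop (nhds 0) :=
    squeeze_zero_norm' (by simpa [Real.norm_eq_abs] using hbound) htail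
  have hL : Filter.Tendsto (fun r : ℝ => r * Real.log (w r)) Filter.atTop (nhds a) := by
    have := hdiff.add hA
    simpa using this
  have hL0 : Filter.Tendsto (fun r : ℝ => Real.log (w r)) Filter.atTop (nhds 0) := by
    have := (Real.continuousAt_log one_ne_zero).tendsto.comp hw1
    simpa [Function.comp_def] using this
  have hexpC : Filter.Tendsto
      (fun r : ℝ => (-(1/2 : ℂ) - Complex.I * (m : ℂ) * (r : ℂ)) * ((Real.log (w r) : ℝ) : ℂ))
      Filter.atTop (nhds (-Complex.I * ((t * E - q * p₁ : ℝ) : ℂ))) := by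
    have hLC : Filter.Tendsto (fun r : ℝ => ((r * Real.log (w r) : ℝ) : ℂ))
        Filter.atTop (nhds ((a : ℝ) : ℂ)) :=
      (Complex.continuous_ofReal.tendsto _).comp hL
    have hL0C : Filter.Tendsto (fun r : ℝ => ((Real.log (w r) : ℝ) : ℂ))
        Filter.atTop (nhds 0) := by
      have := (Complex.continuous_ofReal.tendsto _).comp hL0
      simpa [Function.comp_def] using this
    have hsum := (hL0C.const_mul (-(1/2 : ℂ))).add (hLC.const_mul (-Complex.I * (m : ℂ)))
    have hval : -(1/2 : ℂ) * 0 + (-Complex.I * (m : ℂ)) * ((a : ℝ) : ℂ)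
        = -Complex.I * ((t * E - q * p₁ : ℝ) : ℂ) := by
      have hmC : (m : ℂ) ≠ 0 := Complex.ofReal_ne_zero.mpr hm'
      rw [hadef]
      push_cast
      field_simp
      ring
    rw [hval] at hsum
    refine hsum.congr ?_
    intro r
    push_cast
    ring
  have hfinal : Filter.Tendsto
      (fun r : ℝ => ((w r : ℝ) : ℂ) ^ (-(1 / 2 : ℂ) - Complex.I * (m : ℂ) * (r : ℂ)))
      Filter.atTop
      (nhds (Complex.exp (-Complex.I * ((t * E - q * p₁ : ℝ) : ℂ)))) := by
    have hh := (Complex.continuous_exp.tendsto _).comp hexpC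
    refine hh.congr' ?_
    filter_upwards [hwpos] with r hp
    have hne : ((w r : ℝ) : ℂ) ≠ 0 := Complex.ofReal_ne_zero.mpr (ne_of_gt hp)
    rw [Complex.cpow_def_of_ne_zero hne, ← Complex.ofReal_log hp.le]
    simp only [Function.comp_apply]
    congr 1
    ring
  exact ⟨fun r hr => xpt_eq19 t q r hr, fun r hr => Qf_xpt19 t q r hr, hw1, hminkpos, hfinal⟩
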